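/- For r ≥ 1, let G_r be the group presented with generators τ_1, …, τ_{r−1} and defining relations: τ_i² = 1 for all i; τ_i τ_j = τ_j τ_i whenever |i − j| > 1; and (τ_i q_{k−1} q_{k−j} q_{k−1})² = 1 whenever i + 1 < j < k ≤ r, where q_m denotes the element τ_1(τ_2τ_1)⋯(τ_mτ_{m−1}⋯τ_1). Then the map s_{i,j} ↦ q_{j−1} q_{j−i} q_{j−1} extends to a group isomorphism from the r-fruit cactus group 𝔠_r to G_r, whose inverse sends τ_1 ↦ s_{1,2}, τ_2 ↦ s_{1,2}s_{1,3}s_{1,2}, and τ_i ↦ s_{1,i}s_{1,i+1}s_{1,i}s_{1,i−1} for i > 2. -/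

import Mathlib

/-- A generator `s_{p,q}` of the `r`-fruit cactus group, indexed by `1 ≤ p < q ≤ r`. -/
structure CactusGen (r : ℕ) where
  p : ℕ
  q : ℕ
  one_le_p : 1 ≤ p
  p_lt_q : p < q
  q_le_r : q ≤ r

/-- The defining relations of the `r`-fruit cactus group:
`s_{p,q}² = 1`; `s_{p,q} s_{k,l} = s_{k,l} s_{p,q}` when the intervals are disjoint;
and `s_{p,q} s_{k,l} = s_{p+q-l,p+q-k} s_{p,q}` when `{k,…,l} ⊆ {p,…,q}`. -/
def cactusRels (r : ℕ) : Set (FreeGroup (CactusGen r)) :=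
  {w | (∃ g : CactusGen r, w = FreeGroup.of g * FreeGroup.of g) ∨
    (∃ g h : CactusGen r, (g.q < h.p ∨ h.q < g.p) ∧
      w = FreeGroup.of g * FreeGroup.of h * (FreeGroup.of h * FreeGroup.of g)⁻¹) ∨
    (∃ (g h : CactusGen r) (_ : g.p ≤ h.p) (_ : h.q ≤ g.q),
      w = FreeGroup.of g * FreeGroup.of h *
        (FreeGroup.of
            ⟨g.p + g.q - h.q, g.p + g.q - h.p,
              by have := g.one_le_p; have := h.p_lt_q; omega,
              by have := h.p_lt_q; have := h.one_le_p; have := g.p_lt_q; omega,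
              by have := h.one_le_p; have := g.q_le_r; omega⟩ *
          FreeGroup.of g)⁻¹)}

/-- The `r`-fruit cactus group, as a presented group. -/
abbrev CactusGroup (r : ℕ) : Type := PresentedGroup (cactusRels r)

/-- The generator `s_{p,q}` of the `r`-fruit cactus group. -/
def cactusS (r p q : ℕ) (h1 : 1 ≤ p) (h2 : p < q) (h3 : q ≤ r) : CactusGroup r :=
  PresentedGroup.of ⟨p, q, h1, h2, h3⟩

/-- A generator `τ_i` (for `1 ≤ i ≤ r - 1`) of the presentation `G_r`. -/
def TauGen (r : ℕ) : Type := {i : ℕ // 1 ≤ i ∧ i ≤ r - 1}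

/-- The letter `τ_i` in the free group (interpreted as `1` for invalid indices). -/
def tauF (r i : ℕ) : FreeGroup (TauGen r) :=
  if h : 1 ≤ i ∧ i ≤ r - 1 then FreeGroup.of ⟨i, h⟩ else 1

/-- The descending word `τ_m τ_{m-1} ⋯ τ_1`. -/
def descWord (r : ℕ) : ℕ → FreeGroup (TauGen r)
  | 0 => 1
  | m + 1 => tauF r (m + 1) * descWord r m

/-- The word `q_m = τ_1 (τ_2 τ_1) ⋯ (τ_m τ_{m-1} ⋯ τ_1)`. -/
def qWord (r : ℕ) : ℕ → FreeGroup (TauGen r)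
  | 0 => 1
  | m + 1 => qWord r m * descWord r (m + 1)

/-- The defining relations of `G_r`: `τ_i² = 1`; `τ_i τ_j = τ_j τ_i` for `|i - j| > 1`;
and `(τ_i q_{k-1} q_{k-j} q_{k-1})² = 1` for `i + 1 < j < k ≤ r`. -/
def bkRels (r : ℕ) : Set (FreeGroup (TauGen r)) :=
  {w | (∃ i : ℕ, 1 ≤ i ∧ i ≤ r - 1 ∧ w = tauF r i * tauF r i) ∨
    (∃ i j : ℕ, 1 ≤ i ∧ i ≤ r - 1 ∧ 1 ≤ j ∧ j ≤ r - 1 ∧ (i + 1 < j ∨ j + 1 < i) ∧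
      w = tauF r i * tauF r j * (tauF r j * tauF r i)⁻¹) ∨
    (∃ i j k : ℕ, 1 ≤ i ∧ i + 1 < j ∧ j < k ∧ k ≤ r ∧
      w = (tauF r i * qWord r (k - 1) * qWord r (k - j) * qWord r (k - 1)) ^ 2)}

/-- The group `G_r` presented by the generators `τ_i` and the above relations. -/
abbrev BKGroup (r : ℕ) : Type := PresentedGroup (bkRels r)

/-- The quotient map from the free group on the `τ_i` to `G_r`. -/
def bkMk (r : ℕ) : FreeGroup (TauGen r) →* BKGroup r := PresentedGroup.mk (bkRels r)

/-- The generator `τ_i` of `G_r`. -/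
def bkTau (r i : ℕ) (h1 : 1 ≤ i) (h2 : i ≤ r - 1) : BKGroup r :=
  PresentedGroup.of ⟨i, h1, h2⟩

section helpers
variable {G : Type*} [Group G]

theorem inv_of_sq {a : G} (h : a * a = 1) : a⁻¹ = a := by
  rw [← mul_eq_one_iff_inv_eq]; exact h

theorem flip_rel {a b u : G} (ha : a * a = 1) (hb : b * b = 1) (hu : u * u = 1)
    (h : b * a = u * b) : a * b = b * u := by
  have := congrArg (·⁻¹) h
  simpa [mul_inv_rev, inv_of_sq ha, inv_of_sq hb, inv_of_sq hu] using this

theorem sh2 {a b c d : G} (h : a * b = c * d) (x : G) : a * (b * x) = c * (d * x) := by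
  rw [← mul_assoc, h, mul_assoc]

theorem w3 {a b c d : G} (h : a * (b * c) = d) (x : G) : a * (b * (c * x)) = d * x := by
  rw [← mul_assoc, ← mul_assoc]
  rw [← mul_assoc] at h
  rw [h]

theorem comm_of_sqs {a b : G} (ha : a * a = 1) (hb : b * b = 1)
    (h : (a * b) * (a * b) = 1) : a * b = b * a := by
  have h1 : (a * b)⁻¹ = a * b := inv_of_sq h
  rw [mul_inv_rev, inv_of_sq ha, inv_of_sq hb] at h1
  exact h1.symm

end helpers

namespace CBK

theorem mk_rel_one {α : Type*} (rels : Set (FreeGroup α)) {w : FreeGroup α} (h : w ∈ rels) :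
    PresentedGroup.mk rels w = 1 := by
  have : w ∈ Subgroup.normalClosure rels := Subgroup.subset_normalClosure h
  exact (QuotientGroup.eq_one_iff w).mpr this

variable {r : ℕ}

theorem mk_of (g : CactusGen r) :
    PresentedGroup.mk (cactusRels r) (FreeGroup.of g) = PresentedGroup.of g := rfl

theorem of_sq (g : CactusGen r) :
    (PresentedGroup.of g : CactusGroup r) * PresentedGroup.of g = 1 := by
  have := mk_rel_one (cactusRels r) (w := FreeGroup.of g * FreeGroup.of g) (Or.inl ⟨g, rfl⟩)
  simpa [map_mul, mk_of] using this

theorem of_disj (g h : CactusGen r) (hd : g.q < h.p ∨ h.q < g.p) :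
    (PresentedGroup.of g : CactusGroup r) * PresentedGroup.of h =
      PresentedGroup.of h * PresentedGroup.of g := by
  have := mk_rel_one (cactusRels r)
    (w := FreeGroup.of g * FreeGroup.of h * (FreeGroup.of h * FreeGroup.of g)⁻¹)
    (Or.inr (Or.inl ⟨g, h, hd, rfl⟩))
  rw [map_mul, map_inv, map_mul, map_mul, mk_of, mk_of, mul_inv_eq_one] at this
  exact this

theorem of_nest (g h : CactusGen r) (h4 : g.p ≤ h.p) (h5 : h.q ≤ g.q) :
    (PresentedGroup.of g : CactusGroup r) * PresentedGroup.of h =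
      PresentedGroup.of
        (⟨g.p + g.q - h.q, g.p + g.q - h.p,
          by have := g.one_le_p; have := h.p_lt_q; omega,
          by have := h.p_lt_q; have := h.one_le_p; have := g.p_lt_q; omega,
          by have := h.one_le_p; have := g.q_le_r; omega⟩ : CactusGen r) *
        PresentedGroup.of g := by
  have := mk_rel_one (cactusRels r) (Or.inr (Or.inr ⟨g, h, h4, h5, rfl⟩))
  rw [map_mul, map_inv, map_mul, map_mul, mk_of, mk_of, mk_of, mul_inv_eq_one] at this
  exact this

/-- generalized generator, trivial outside range -/
noncomputable def S (r p q : ℕ) : CactusGroup r :=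
  if h : 1 ≤ p ∧ p < q ∧ q ≤ r then cactusS r p q h.1 h.2.1 h.2.2 else 1

theorem S_eq (p q : ℕ) (h1 : 1 ≤ p) (h2 : p < q) (h3 : q ≤ r) :
    S r p q = cactusS r p q h1 h2 h3 := dif_pos ⟨h1, h2, h3⟩

theorem S_eq_one {p q : ℕ} (h : ¬(1 ≤ p ∧ p < q ∧ q ≤ r)) : S r p q = 1 := dif_neg h

theorem S_of (g : CactusGen r) : S r g.p g.q = PresentedGroup.of g := by
  obtain ⟨p, q, h1, h2, h3⟩ := g
  exact S_eq p q h1 h2 h3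

theorem S_sq (p q : ℕ) : S r p q * S r p q = 1 := by
  by_cases h : 1 ≤ p ∧ p < q ∧ q ≤ r
  · rw [S_eq p q h.1 h.2.1 h.2.2]; exact of_sq _
  · rw [S_eq_one h, one_mul]

theorem S_mul_self_cancel (p q : ℕ) (x : CactusGroup r) : S r p q * (S r p q * x) = x := by
  rw [← mul_assoc, S_sq, one_mul]

theorem S_disj {p q k l : ℕ} (h1 : 1 ≤ p) (h2 : p < q) (h3 : q ≤ r)
    (h4 : k < l) (h5 : l ≤ r) (h6 : q < k) :
    S r p q * S r k l = S r k l * S r p q := by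
  have hk : 1 ≤ k := by omega
  rw [S_eq p q h1 h2 h3, S_eq k l hk h4 h5]
  exact of_disj ⟨p, q, h1, h2, h3⟩ ⟨k, l, hk, h4, h5⟩ (Or.inl h6)

theorem S_nest {p q k l : ℕ} (h1 : 1 ≤ p) (h2 : p < q) (h3 : q ≤ r)
    (h4 : p ≤ k) (h5 : k < l) (h6 : l ≤ q) :
    S r p q * S r k l = S r (p + q - l) (p + q - k) * S r p q := by
  have hk : 1 ≤ k := le_trans h1 h4
  rw [S_eq p q h1 h2 h3, S_eq k l hk h5 (le_trans h6 h3),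
    S_eq (p + q - l) (p + q - k) (by omega) (by omega) (by omega)]
  exact of_nest ⟨p, q, h1, h2, h3⟩ ⟨k, l, hk, h5, le_trans h6 h3⟩ h4 h6

end CBK

namespace CBK
variable {r : ℕ}

theorem S_cancel (p q : ℕ) (x : CactusGroup r) : S r p q * (S r p q * x) = x :=
  S_mul_self_cancel p q x

theorem Sconj {n k l : ℕ} (hn2 : 2 ≤ n) (hnr : n ≤ r) (hk : 1 ≤ k) (hl : l ≤ n) :
    S r 1 n * (S r k l * S r 1 n) = S r (n + 1 - l) (n + 1 - k) := by
  by_cases hkl : k < l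
  · have h := S_nest (r := r) (p := 1) (q := n) (k := k) (l := l) le_rfl (by omega) hnr hk hkl hl
    calc S r 1 n * (S r k l * S r 1 n) = (S r 1 n * S r k l) * S r 1 n := by rw [mul_assoc]
    _ = (S r (1 + n - l) (1 + n - k) * S r 1 n) * S r 1 n := by rw [h]
    _ = S r (1 + n - l) (1 + n - k) * (S r 1 n * S r 1 n) := by rw [mul_assoc]
    _ = S r (n + 1 - l) (n + 1 - k) := by
        rw [S_sq, mul_one, show 1 + n - l = n + 1 - l by omega,
          show 1 + n - k = n + 1 - k by omega]
  · rw [S_eq_one (p := k) (q := l) (by omega), one_mul, S_sq,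
      S_eq_one (p := n + 1 - l) (q := n + 1 - k) (by omega)]

/-- the image of `τ_i` in the cactus group -/
noncomputable def psiT (r i : ℕ) : CactusGroup r :=
  S r 1 i * (S r 1 (i + 1) * (S r 1 i * S r 1 (i - 1)))

theorem psiT_sq {i : ℕ} (hi : 1 ≤ i) (hir : i ≤ r - 1) (hr : 1 ≤ r) :
    psiT r i * psiT r i = 1 := by
  have hi1r : i + 1 ≤ r := by omega
  rcases Nat.lt_or_ge i 3 with h3 | h3
  · interval_cases i
    · simp only [psiT]
      rw [S_eq_one (p := 1) (q := 1) (by omega), S_eq_one (p := 1) (q := 0) (by omega)]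
      simp only [one_mul, mul_one]
      exact S_sq 1 2
    · simp only [psiT]
      rw [S_eq_one (p := 1) (q := 1) (by omega)]
      simp only [mul_one, mul_assoc, S_cancel]
      exact S_sq 1 2
  · -- i ≥ 3
    set a := S r 1 i with ha
    set b := S r 1 (i + 1) with hb
    set c := S r 1 (i - 1) with hc
    set u := S r 2 (i + 1) with hu
    set v := S r 3 (i + 1) with hv
    set w := S r 2 i with hw
    have hba : b * a = u * b := by
      have := S_nest (r := r) (p := 1) (q := i + 1) (k := 1) (l := i)
        le_rfl (by omega) hi1r le_rfl (by omega) (by omega)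
      rwa [show 1 + (i + 1) - i = 2 by omega, show 1 + (i + 1) - 1 = i + 1 by omega] at this
    have F1 : a * b = b * u := flip_rel (S_sq _ _) (S_sq _ _) (S_sq _ _) hba
    have hbc : b * c = v * b := by
      have := S_nest (r := r) (p := 1) (q := i + 1) (k := 1) (l := i - 1)
        le_rfl (by omega) hi1r le_rfl (by omega) (by omega)
      rwa [show 1 + (i + 1) - (i - 1) = 3 by omega, show 1 + (i + 1) - 1 = i + 1 by omega] at this
    have F2 : c * b = b * v := flip_rel (S_sq _ _) (S_sq _ _) (S_sq _ _) hbc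
    have F3 : a * c = w * a := by
      have := S_nest (r := r) (p := 1) (q := i) (k := 1) (l := i - 1)
        le_rfl (by omega) (by omega) le_rfl (by omega) (by omega)
      rwa [show 1 + i - (i - 1) = 2 by omega, show 1 + i - 1 = i by omega] at this
    have huw : u * w = v * u := by
      have := S_nest (r := r) (p := 2) (q := i + 1) (k := 2) (l := i)
        (by omega) (by omega) hi1r le_rfl (by omega) (by omega)
      rwa [show 2 + (i + 1) - i = 3 by omega, show 2 + (i + 1) - 2 = i + 1 by omega] at this
    have F5 : v * (u * w) = u := by
      rw [huw]
      exact S_cancel 3 (i + 1) u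
    have CL : c * (a * (b * (a * c))) = a * (b * a) := by
      calc c * (a * (b * (a * c))) = c * (a * (b * (w * a))) := by rw [F3]
      _ = c * (b * (u * (w * a))) := by rw [sh2 F1]
      _ = b * (v * (u * (w * a))) := by rw [sh2 F2]
      _ = b * (u * a) := by rw [w3 F5]
      _ = a * (b * a) := by rw [sh2 F1]
    show (a * (b * (a * c))) * (a * (b * (a * c))) = 1
    calc (a * (b * (a * c))) * (a * (b * (a * c)))
        = a * (b * (a * (c * (a * (b * (a * c)))))) := by simp only [mul_assoc]
    _ = a * (b * (a * (a * (b * a)))) := by rw [CL]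
    _ = 1 := by simp only [ha, hb, S_cancel, S_sq]

theorem psiT_comm {i j : ℕ} (hi : 1 ≤ i) (hij : i + 1 < j) (hjr : j ≤ r - 1) (hr : 1 ≤ r) :
    psiT r i * psiT r j = psiT r j * psiT r i := by
  have hj1r : j + 1 ≤ r := by omega
  set J1 := S r 1 (j - 1) with hJ1
  set J2 := S r 1 j with hJ2
  set J3 := S r 1 (j + 1) with hJ3
  set A := psiT r i with hA
  -- stage 1 conjugation identities
  have e1 : J1 * (S r 1 i * J1) = S r (j - i) (j - 1) := by
    have := Sconj (r := r) (n := j - 1) (k := 1) (l := i) (by omega) (by omega) le_rfl (by omega)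
    rwa [show j - 1 + 1 - i = j - i by omega, show j - 1 + 1 - 1 = j - 1 by omega] at this
  have e2 : J1 * (S r 1 (i + 1) * J1) = S r (j - i - 1) (j - 1) := by
    have := Sconj (r := r) (n := j - 1) (k := 1) (l := i + 1) (by omega) (by omega) le_rfl (by omega)
    rwa [show j - 1 + 1 - (i + 1) = j - i - 1 by omega, show j - 1 + 1 - 1 = j - 1 by omega] at this
  have e4 : J1 * (S r 1 (i - 1) * J1) = S r (j - i + 1) (j - 1) := by
    have := Sconj (r := r) (n := j - 1) (k := 1) (l := i - 1) (by omega) (by omega) le_rfl (by omega)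
    rwa [show j - 1 + 1 - (i - 1) = j - i + 1 by omega, show j - 1 + 1 - 1 = j - 1 by omega] at this
  have st1 : J1 * (A * J1) =
      S r (j - i) (j - 1) * (S r (j - i - 1) (j - 1) * (S r (j - i) (j - 1) * S r (j - i + 1) (j - 1))) := by
    rw [← e1, ← e2, ← e4, hA]
    simp only [psiT, mul_assoc, S_cancel, hJ1]
  -- stage 2
  have f1 : J2 * (S r (j - i) (j - 1) * J2) = S r 2 (i + 1) := by
    have := Sconj (r := r) (n := j) (k := j - i) (l := j - 1) (by omega) (by omega) (by omega) (by omega)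
    rwa [show j + 1 - (j - 1) = 2 by omega, show j + 1 - (j - i) = i + 1 by omega] at this
  have f2 : J2 * (S r (j - i - 1) (j - 1) * J2) = S r 2 (i + 2) := by
    have := Sconj (r := r) (n := j) (k := j - i - 1) (l := j - 1) (by omega) (by omega) (by omega) (by omega)
    rwa [show j + 1 - (j - 1) = 2 by omega, show j + 1 - (j - i - 1) = i + 2 by omega] at this
  have f4 : J2 * (S r (j - i + 1) (j - 1) * J2) = S r 2 i := by
    have := Sconj (r := r) (n := j) (k := j - i + 1) (l := j - 1) (by omega) (by omega) (by omega) (by omega)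
    rwa [show j + 1 - (j - 1) = 2 by omega, show j + 1 - (j - i + 1) = i by omega] at this
  have st2 : J2 * ((S r (j - i) (j - 1) * (S r (j - i - 1) (j - 1) * (S r (j - i) (j - 1) * S r (j - i + 1) (j - 1)))) * J2) =
      S r 2 (i + 1) * (S r 2 (i + 2) * (S r 2 (i + 1) * S r 2 i)) := by
    rw [← f1, ← f2, ← f4]
    simp only [mul_assoc, S_cancel, hJ2]
  -- stage 3
  have g1 : J3 * (S r 2 (i + 1) * J3) = S r (j + 1 - i) j := by
    have := Sconj (r := r) (n := j + 1) (k := 2) (l := i + 1) (by omega) (by omega) (by omega) (by omega)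
    rwa [show j + 1 + 1 - (i + 1) = j + 1 - i by omega, show j + 1 + 1 - 2 = j by omega] at this
  have g2 : J3 * (S r 2 (i + 2) * J3) = S r (j - i) j := by
    have := Sconj (r := r) (n := j + 1) (k := 2) (l := i + 2) (by omega) (by omega) (by omega) (by omega)
    rwa [show j + 1 + 1 - (i + 2) = j - i by omega, show j + 1 + 1 - 2 = j by omega] at this
  have g4 : J3 * (S r 2 i * J3) = S r (j + 2 - i) j := by
    have := Sconj (r := r) (n := j + 1) (k := 2) (l := i) (by omega) (by omega) (by omega) (by omega)
    rwa [show j + 1 + 1 - i = j + 2 - i by omega, show j + 1 + 1 - 2 = j by omega] at this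
  have st3 : J3 * ((S r 2 (i + 1) * (S r 2 (i + 2) * (S r 2 (i + 1) * S r 2 i))) * J3) =
      S r (j + 1 - i) j * (S r (j - i) j * (S r (j + 1 - i) j * S r (j + 2 - i) j)) := by
    rw [← g1, ← g2, ← g4]
    simp only [mul_assoc, S_cancel, hJ3]
  -- stage 4
  have k1 : J2 * (S r (j + 1 - i) j * J2) = S r 1 i := by
    have := Sconj (r := r) (n := j) (k := j + 1 - i) (l := j) (by omega) (by omega) (by omega) le_rfl
    rwa [show j + 1 - j = 1 by omega, show j + 1 - (j + 1 - i) = i by omega] at this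
  have k2 : J2 * (S r (j - i) j * J2) = S r 1 (i + 1) := by
    have := Sconj (r := r) (n := j) (k := j - i) (l := j) (by omega) (by omega) (by omega) le_rfl
    rwa [show j + 1 - j = 1 by omega, show j + 1 - (j - i) = i + 1 by omega] at this
  have k4 : J2 * (S r (j + 2 - i) j * J2) = S r 1 (i - 1) := by
    have := Sconj (r := r) (n := j) (k := j + 2 - i) (l := j) (by omega) (by omega) (by omega) le_rfl
    rwa [show j + 1 - j = 1 by omega, show j + 1 - (j + 2 - i) = i - 1 by omega] at this
  have st4 : J2 * ((S r (j + 1 - i) j * (S r (j - i) j * (S r (j + 1 - i) j * S r (j + 2 - i) j))) * J2) = A := by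
    rw [hA]
    simp only [psiT]
    rw [← k1, ← k2, ← k4]
    simp only [mul_assoc, S_cancel, hJ2]
  -- combine
  have T : psiT r j * (A * (J1 * (J2 * (J3 * J2)))) = A := by
    calc psiT r j * (A * (J1 * (J2 * (J3 * J2))))
        = J2 * (J3 * (J2 * ((J1 * (A * J1)) * (J2 * (J3 * J2))))) := by
          simp only [psiT, mul_assoc, ← hJ1, ← hJ2, ← hJ3]
    _ = J2 * (J3 * ((J2 * ((S r (j - i) (j - 1) * (S r (j - i - 1) (j - 1) * (S r (j - i) (j - 1) * S r (j - i + 1) (j - 1)))) * J2)) * (J3 * J2))) := by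
          rw [st1]; simp only [mul_assoc]
    _ = J2 * ((J3 * ((S r 2 (i + 1) * (S r 2 (i + 2) * (S r 2 (i + 1) * S r 2 i))) * J3)) * J2) := by
          rw [st2]; simp only [mul_assoc]
    _ = J2 * ((S r (j + 1 - i) j * (S r (j - i) j * (S r (j + 1 - i) j * S r (j + 2 - i) j))) * J2) := by
          rw [st3]
    _ = A := st4
  have hinv : (J1 * (J2 * (J3 * J2))) * psiT r j = 1 := by
    simp only [psiT, hJ1, hJ2, hJ3, mul_assoc, S_cancel, S_sq]
  calc A * psiT r j = (psiT r j * (A * (J1 * (J2 * (J3 * J2))))) * psiT r j := by rw [T]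
  _ = psiT r j * (A * ((J1 * (J2 * (J3 * J2))) * psiT r j)) := by simp only [mul_assoc]
  _ = psiT r j * A := by rw [hinv, mul_one]

end CBK

namespace CBK
variable {r : ℕ}

noncomputable def tt (r i : ℕ) : BKGroup r := bkMk r (tauF r i)
noncomputable def tD (r m : ℕ) : BKGroup r := bkMk r (descWord r m)
noncomputable def tQ (r m : ℕ) : BKGroup r := bkMk r (qWord r m)

theorem tD_zero : tD r 0 = 1 := map_one _
theorem tQ_zero : tQ r 0 = 1 := map_one _

theorem tD_succ (m : ℕ) : tD r (m + 1) = tt r (m + 1) * tD r m := by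
  simp only [tD, descWord, map_mul, tt]

theorem tQ_succ (m : ℕ) : tQ r (m + 1) = tQ r m * tD r (m + 1) := by
  simp only [tQ, qWord, map_mul, tD]

theorem tt_sq (i : ℕ) : tt r i * tt r i = 1 := by
  by_cases h : 1 ≤ i ∧ i ≤ r - 1
  · have := mk_rel_one (bkRels r) (w := tauF r i * tauF r i) (Or.inl ⟨i, h.1, h.2, rfl⟩)
    simpa only [map_mul, tt, bkMk] using this
  · simp [tt, tauF, h]

theorem tt_cancel (i : ℕ) (x : BKGroup r) : tt r i * (tt r i * x) = x := by
  rw [← mul_assoc, tt_sq, one_mul]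

theorem tt_comm {i j : ℕ} (h : i + 1 < j ∨ j + 1 < i) : tt r i * tt r j = tt r j * tt r i := by
  by_cases hi : 1 ≤ i ∧ i ≤ r - 1
  · by_cases hj : 1 ≤ j ∧ j ≤ r - 1
    · have := mk_rel_one (bkRels r)
        (w := tauF r i * tauF r j * (tauF r j * tauF r i)⁻¹)
        (Or.inr (Or.inl ⟨i, j, hi.1, hi.2, hj.1, hj.2, h, rfl⟩))
      rw [map_mul, map_inv, map_mul, map_mul, mul_inv_eq_one] at this
      exact this
    · simp [tt, tauF, hj, dif_neg]
  · simp [tt, tauF, hi, dif_neg]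

theorem comm_tD {i m : ℕ} (h : m + 2 ≤ i) : Commute (tt r i) (tD r m) := by
  induction m with
  | zero => rw [tD_zero]; exact Commute.one_right _
  | succ m ih =>
    rw [tD_succ]
    exact Commute.mul_right (tt_comm (Or.inr (by omega))) (ih (by omega))

theorem comm_tQ {i m : ℕ} (h : m + 2 ≤ i) : Commute (tt r i) (tQ r m) := by
  induction m with
  | zero => rw [tQ_zero]; exact Commute.one_right _
  | succ m ih =>
    rw [tQ_succ]
    exact Commute.mul_right (ih (by omega)) (comm_tD h)

theorem E1 : ∀ m, ∀ x : BKGroup r, tD r (m + 1) * (tQ r m * (tD r (m + 1) * x)) = tQ r m * x := by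
  intro m
  induction m with
  | zero =>
    intro x
    simp only [tQ_zero, one_mul, tD_succ, tD_zero, mul_one, tt_cancel]
  | succ m ih =>
    intro x
    rw [tD_succ (m + 1), tQ_succ m]
    simp only [mul_assoc]
    rw [ih]
    rw [sh2 (comm_tQ (i := m + 2) (m := m) (by omega)).eq]
    rw [tt_cancel]

theorem E1t (m : ℕ) : tD r (m + 1) * (tQ r m * tD r (m + 1)) = tQ r m := by
  have := E1 (r := r) m 1
  simpa only [mul_one] using this

theorem tQ_sq (m : ℕ) : tQ r m * tQ r m = 1 := by
  induction m with
  | zero => rw [tQ_zero, one_mul]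
  | succ m ih =>
    rw [tQ_succ]
    calc tQ r m * tD r (m + 1) * (tQ r m * tD r (m + 1))
        = tQ r m * (tD r (m + 1) * (tQ r m * tD r (m + 1))) := by rw [mul_assoc]
    _ = tQ r m * tQ r m := by rw [E1t]
    _ = 1 := ih

theorem tQ_cancel (m : ℕ) (x : BKGroup r) : tQ r m * (tQ r m * x) = x := by
  rw [← mul_assoc, tQ_sq, one_mul]

theorem tDQ (m : ℕ) (x : BKGroup r) : tD r (m + 1) * (tQ r (m + 1) * x) = tQ r m * x := by
  rw [tQ_succ]
  calc tD r (m + 1) * (tQ r m * tD r (m + 1) * x)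
      = tD r (m + 1) * (tQ r m * (tD r (m + 1) * x)) := by rw [mul_assoc]
  _ = tQ r m * x := E1 m x

theorem shiftY : ∀ e c b : ℕ, ∀ x : BKGroup r,
    tD r (c + b + 2 + e) * (tQ r (c + b + 1) * (tQ r b * (tQ r (c + b + 1) * x))) =
      tQ r (c + b) * (tQ r b * (tQ r (c + b) * (tD r (c + b + 2 + e) * x))) := by
  intro e
  induction e with
  | zero =>
    intro c b x
    rw [show c + b + 2 + 0 = (c + b + 1) + 1 by omega, tD_succ]
    simp only [mul_assoc]
    rw [tDQ]
    rw [sh2 (comm_tQ (i := c + b + 2) (m := c + b) (by omega)).eq]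
    rw [sh2 (comm_tQ (i := c + b + 2) (m := b) (by omega)).eq]
    rw [tQ_succ (c + b)]
    simp only [mul_assoc]
    rw [sh2 (comm_tQ (i := c + b + 2) (m := c + b) (by omega)).eq]
  | succ e ih =>
    intro c b x
    rw [show c + b + 2 + (e + 1) = (c + b + 2 + e) + 1 by omega, tD_succ]
    simp only [mul_assoc]
    rw [ih]
    rw [sh2 (comm_tQ (i := c + b + 2 + e + 1) (m := c + b) (by omega)).eq]
    rw [sh2 (comm_tQ (i := c + b + 2 + e + 1) (m := b) (by omega)).eq]
    rw [sh2 (comm_tQ (i := c + b + 2 + e + 1) (m := c + b) (by omega)).eq]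

theorem Gpoly : ∀ d b a : ℕ, ∀ x : BKGroup r,
    tQ r (d + b + a) * (tQ r (d + b) * (tQ r b * (tQ r (d + b) * (tQ r (d + b + a) * x)))) =
      tQ r (b + a) * (tQ r b * (tQ r (b + a) * x)) := by
  intro d
  induction d with
  | zero =>
    intro b a x
    simp only [Nat.zero_add, tQ_cancel]
  | succ d ih =>
    intro b a x
    match a with
    | 0 => simp only [Nat.add_zero, tQ_cancel]
    | a + 1 =>
      have h1 : d + 1 + b + (a + 1) = (d + b + a + 1) + 1 := by omega
      have h2 : d + 1 + b = (d + b) + 1 := by omega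
      rw [h1]
      nth_rewrite 1 [tQ_succ (d + b + a + 1)]
      simp only [mul_assoc]
      have hs := shiftY (r := r) a d b (tQ r (d + b + a + 1 + 1) * x)
      rw [show d + b + 2 + a = d + b + a + 1 + 1 by omega] at hs
      rw [show d + b + 1 = d + 1 + b by omega] at hs
      rw [hs]
      rw [tDQ (d + b + a + 1)]
      have hi := ih b (a + 1) x
      rw [show d + b + (a + 1) = d + b + a + 1 by omega] at hi
      rw [hi]

theorem R_comm {i j k : ℕ} (h1 : 1 ≤ i) (h2 : i + 1 < j) (h3 : j < k) (h4 : k ≤ r) :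
    Commute (tt r i) (tQ r (k - 1) * (tQ r (k - j) * tQ r (k - 1))) := by
  have hrel := mk_rel_one (bkRels r)
    (w := (tauF r i * qWord r (k - 1) * qWord r (k - j) * qWord r (k - 1)) ^ 2)
    (Or.inr (Or.inr ⟨i, j, k, h1, h2, h3, h4, rfl⟩))
  rw [map_pow, map_mul, map_mul, map_mul] at hrel
  have hY : (tQ r (k - 1) * (tQ r (k - j) * tQ r (k - 1))) *
      (tQ r (k - 1) * (tQ r (k - j) * tQ r (k - 1))) = 1 := by
    simp only [mul_assoc, tQ_cancel]
    exact tQ_sq _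
  have hsq : (tt r i * (tQ r (k - 1) * (tQ r (k - j) * tQ r (k - 1)))) *
      (tt r i * (tQ r (k - 1) * (tQ r (k - j) * tQ r (k - 1)))) = 1 := by
    have : PresentedGroup.mk (bkRels r) (tauF r i) *
        PresentedGroup.mk (bkRels r) (qWord r (k - 1)) *
        PresentedGroup.mk (bkRels r) (qWord r (k - j)) *
        PresentedGroup.mk (bkRels r) (qWord r (k - 1)) =
        tt r i * (tQ r (k - 1) * (tQ r (k - j) * tQ r (k - 1))) := by
      simp only [tt, tQ, bkMk, mul_assoc]
    rw [pow_two, this] at hrel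
    exact hrel
  exact comm_of_sqs (tt_sq i) hY hsq

theorem comm_tD_of {m : ℕ} {Z : BKGroup r} (h : ∀ i, 1 ≤ i → i ≤ m → Commute (tt r i) Z) :
    Commute (tD r m) Z := by
  induction m with
  | zero => rw [tD_zero]; exact Commute.one_left _
  | succ m ih =>
    rw [tD_succ]
    exact Commute.mul_left (h (m + 1) (by omega) le_rfl)
      (ih fun i hi him => h i hi (by omega))

theorem comm_tQ_of {m : ℕ} {Z : BKGroup r} (h : ∀ i, 1 ≤ i → i ≤ m → Commute (tt r i) Z) :
    Commute (tQ r m) Z := by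
  induction m with
  | zero => rw [tQ_zero]; exact Commute.one_left _
  | succ m ih =>
    rw [tQ_succ]
    exact Commute.mul_left (ih fun i hi him => h i hi (by omega)) (comm_tD_of h)

theorem Gsub {j l q : ℕ} (hj : 1 ≤ j) (hjl : j ≤ l) (hlq : l ≤ q) : ∀ x : BKGroup r,
    tQ r (q - 1) * (tQ r (l - 1) * (tQ r (l - j) * (tQ r (l - 1) * (tQ r (q - 1) * x)))) =
      tQ r (q - j) * (tQ r (l - j) * (tQ r (q - j) * x)) := by
  intro x
  have hG := Gpoly (r := r) (j - 1) (l - j) (q - l) x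
  rw [show j - 1 + (l - j) + (q - l) = q - 1 by omega,
    show j - 1 + (l - j) = l - 1 by omega,
    show l - j + (q - l) = q - j by omega] at hG
  exact hG

end CBK

namespace CBK
variable {r : ℕ}

/-! ### The homomorphism φ : Cactus → BK -/

noncomputable def fphi (r : ℕ) : CactusGen r → BKGroup r :=
  fun g => tQ r (g.q - 1) * (tQ r (g.q - g.p) * tQ r (g.q - 1))

theorem fphi_sq (g : CactusGen r) : fphi r g * fphi r g = 1 := by
  simp only [fphi, mul_assoc, tQ_cancel]
  exact tQ_sq _

theorem comm_fphi {g h : CactusGen r} (hlt : g.q < h.p) : Commute (fphi r g) (fphi r h) := by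
  have hgq : 1 ≤ g.q := le_trans g.one_le_p (le_of_lt g.p_lt_q)
  have key : ∀ m, m ≤ g.q - 1 → Commute (tQ r m) (fphi r h) := by
    intro m hm
    apply comm_tQ_of
    intro i hi him
    have := R_comm (r := r) (i := i) (j := h.p) (k := h.q) hi (by omega) h.p_lt_q h.q_le_r
    exact this
  show Commute (tQ r (g.q - 1) * (tQ r (g.q - g.p) * tQ r (g.q - 1))) (fphi r h)
  exact Commute.mul_left (key _ le_rfl)
    (Commute.mul_left (key _ (by have := g.one_le_p; omega)) (key _ le_rfl))

theorem hphi (r : ℕ) : ∀ w ∈ cactusRels r, FreeGroup.lift (fphi r) w = 1 := by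
  rintro w (⟨g, rfl⟩ | ⟨g, h, hd, rfl⟩ | ⟨g, h, h4, h5, rfl⟩)
  · rw [map_mul, FreeGroup.lift_apply_of]
    exact fphi_sq g
  · rw [map_mul, map_inv, map_mul, map_mul]
    simp only [FreeGroup.lift_apply_of]
    rw [mul_inv_eq_one]
    rcases hd with hd | hd
    · exact (comm_fphi hd).eq
    · exact ((comm_fphi hd).symm).eq
  · rw [map_mul, map_inv, map_mul, map_mul]
    simp only [FreeGroup.lift_apply_of]
    rw [mul_inv_eq_one]
    obtain ⟨p, q, hgp, hgq, hgr⟩ := g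
    obtain ⟨k, l, hhp, hhq, hhr⟩ := h
    simp only at h4 h5
    have hkey : ∀ x : BKGroup r,
        tQ r (q - 1) * (tQ r (q - p) * (tQ r (q - 1) * (tQ r (l - 1) * (tQ r (l - k) *
          (tQ r (l - 1) * (tQ r (q - 1) * (tQ r (q - p) * (tQ r (q - 1) * x)))))))) =
        tQ r (p + q - k - 1) * (tQ r (l - k) * (tQ r (p + q - k - 1) * x)) := by
      intro x
      rw [Gsub (r := r) (j := k) (l := l) (q := q) (by omega) (by omega) (by omega)]
      have G2 := Gsub (r := r) (j := q - l + 1) (l := q - k + 1) (q := q - p + 1)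
        (by omega) (by omega) (by omega) (tQ r (q - 1) * x)
      rw [show q - p + 1 - 1 = q - p by omega, show q - k + 1 - 1 = q - k by omega,
        show q - k + 1 - (q - l + 1) = l - k by omega,
        show q - p + 1 - (q - l + 1) = l - p by omega] at G2
      rw [G2]
      have G3 := Gsub (r := r) (j := k - p + 1) (l := l - p + 1) (q := q)
        (by omega) (by omega) (by omega) x
      rw [show l - p + 1 - 1 = l - p by omega,
        show l - p + 1 - (k - p + 1) = l - k by omega,
        show q - (k - p + 1) = p + q - k - 1 by omega] at G3
      rw [G3]
    show fphi r ⟨p, q, hgp, hgq, hgr⟩ * fphi r ⟨k, l, hhp, hhq, hhr⟩ = _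
    have hsq := fphi_sq (r := r) ⟨p, q, hgp, hgq, hgr⟩
    calc fphi r ⟨p, q, hgp, hgq, hgr⟩ * fphi r ⟨k, l, hhp, hhq, hhr⟩
        = fphi r ⟨p, q, hgp, hgq, hgr⟩ * (fphi r ⟨k, l, hhp, hhq, hhr⟩ *
            (fphi r ⟨p, q, hgp, hgq, hgr⟩ * fphi r ⟨p, q, hgp, hgq, hgr⟩)) := by
          rw [hsq, mul_one]
    _ = _ := by
      simp only [fphi, mul_assoc]
      rw [hkey (tQ r (q - 1) * (tQ r (q - p) * tQ r (q - 1)))]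
      rw [show p + q - k - (p + q - l) = l - k by omega]

/-! ### The homomorphism ψ : BK → Cactus -/

noncomputable def fpsi (r : ℕ) : TauGen r → CactusGroup r := fun x => psiT r x.1

theorem lift_tauF {i : ℕ} (h1 : 1 ≤ i) (h2 : i ≤ r - 1) :
    FreeGroup.lift (fpsi r) (tauF r i) = psiT r i := by
  rw [tauF, dif_pos ⟨h1, h2⟩]
  erw [FreeGroup.lift_apply_of]
  rfl

theorem psi_d : ∀ m, m ≤ r - 1 → FreeGroup.lift (fpsi r) (descWord r m) =
    S r 1 m * S r 1 (m + 1) := by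
  intro m
  induction m with
  | zero =>
    intro _
    rw [show descWord r 0 = 1 from rfl, map_one,
      S_eq_one (by omega), S_eq_one (by omega), one_mul]
  | succ m ih =>
    intro hm
    rw [show descWord r (m + 1) = tauF r (m + 1) * descWord r m from rfl, map_mul,
      lift_tauF (by omega) hm, ih (by omega)]
    simp only [psiT, Nat.add_sub_cancel, mul_assoc, S_cancel, S_sq, mul_one]

theorem psi_q : ∀ m, m ≤ r - 1 → FreeGroup.lift (fpsi r) (qWord r m) = S r 1 (m + 1) := by
  intro m
  induction m with
  | zero =>
    intro _
    rw [show qWord r 0 = 1 from rfl, map_one, S_eq_one (by omega)]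
  | succ m ih =>
    intro hm
    rw [show qWord r (m + 1) = qWord r m * descWord r (m + 1) from rfl, map_mul,
      ih (by omega), psi_d (m + 1) hm]
    simp only [mul_assoc, S_cancel]

theorem comm_X_S {m j k : ℕ} (hm : m < j) (hjk : j < k) (hkr : k ≤ r) :
    S r 1 m * S r j k = S r j k * S r 1 m := by
  by_cases h : 2 ≤ m ∧ m ≤ r
  · exact S_disj le_rfl (by omega) h.2 hjk hkr hm
  · rw [S_eq_one (p := 1) (q := m) (by omega), one_mul, mul_one]

theorem comm_psiT_S {i j k : ℕ} (hij : i + 1 < j) (hjk : j < k) (hkr : k ≤ r) :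
    Commute (psiT r i) (S r j k) := by
  have c : ∀ m, m < j → Commute (S r 1 m) (S r j k) := fun m hm => comm_X_S hm hjk hkr
  exact Commute.mul_left (c i (by omega)) (Commute.mul_left (c (i + 1) (by omega))
    (Commute.mul_left (c i (by omega)) (c (i - 1) (by omega))))

theorem hpsi (r : ℕ) : ∀ w ∈ bkRels r, FreeGroup.lift (fpsi r) w = 1 := by
  rintro w (⟨i, h1, h2, rfl⟩ | ⟨i, j, hi1, hi2, hj1, hj2, hij, rfl⟩ |
    ⟨i, j, k, h1, h2, h3, h4, rfl⟩)
  · rw [map_mul, lift_tauF h1 h2]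
    exact psiT_sq h1 h2 (by omega)
  · rw [map_mul, map_inv, map_mul, map_mul, lift_tauF hi1 hi2, lift_tauF hj1 hj2,
      mul_inv_eq_one]
    rcases hij with hij | hij
    · exact psiT_comm hi1 hij hj2 (by omega)
    · exact (psiT_comm hj1 hij hi2 (by omega)).symm
  · rw [map_pow, map_mul, map_mul, map_mul, lift_tauF h1 (by omega),
      psi_q (k - 1) (by omega), psi_q (k - j) (by omega),
      show k - 1 + 1 = k by omega]
    have hY : S r 1 k * (S r 1 (k - j + 1) * S r 1 k) = S r j k := by
      have := Sconj (r := r) (n := k) (k := 1) (l := k - j + 1)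
        (by omega) h4 le_rfl (by omega)
      rwa [show k + 1 - (k - j + 1) = j by omega, show k + 1 - 1 = k by omega] at this
    have hc : Commute (psiT r i) (S r j k) := comm_psiT_S h2 h3 h4
    have hu : psiT r i * psiT r i = 1 := psiT_sq h1 (by omega) (by omega)
    calc (psiT r i * S r 1 k * S r 1 (k - j + 1) * S r 1 k) ^ 2
        = (psiT r i * (S r 1 k * (S r 1 (k - j + 1) * S r 1 k))) ^ 2 := by
          simp only [mul_assoc]
    _ = (psiT r i * S r j k) ^ 2 := by rw [hY]
    _ = 1 := by
        rw [pow_two]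
        calc psiT r i * S r j k * (psiT r i * S r j k)
            = psiT r i * (S r j k * psiT r i * S r j k) := by simp only [mul_assoc]
        _ = psiT r i * (psiT r i * S r j k * S r j k) := by rw [hc.symm.eq]
        _ = 1 := by
            rw [mul_assoc, ← mul_assoc (psiT r i)]
            rw [hu, one_mul, S_sq]

end CBK

namespace CBK
variable {r : ℕ}

noncomputable def phiHom (r : ℕ) : CactusGroup r →* BKGroup r :=
  PresentedGroup.toGroup (hphi r)

noncomputable def psiHom (r : ℕ) : BKGroup r →* CactusGroup r :=
  PresentedGroup.toGroup (hpsi r)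

theorem phiHom_of (g : CactusGen r) : phiHom r (PresentedGroup.of g) = fphi r g :=
  PresentedGroup.toGroup.of _

theorem psiHom_of (x : TauGen r) : psiHom r (PresentedGroup.of x) = fpsi r x :=
  PresentedGroup.toGroup.of _

theorem psiHom_mk (w : FreeGroup (TauGen r)) :
    psiHom r (PresentedGroup.mk (bkRels r) w) = FreeGroup.lift (fpsi r) w := rfl

theorem phiHom_mk (w : FreeGroup (CactusGen r)) :
    phiHom r (PresentedGroup.mk (cactusRels r) w) = FreeGroup.lift (fphi r) w := rfl

theorem psiHom_tQ (m : ℕ) (hm : m ≤ r - 1) : psiHom r (tQ r m) = S r 1 (m + 1) := by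
  rw [tQ, bkMk, psiHom_mk, psi_q m hm]

theorem phiHom_X (m : ℕ) (hm : m ≤ r) : phiHom r (S r 1 m) = tQ r (m - 1) := by
  by_cases h2 : 2 ≤ m
  · rw [S_eq 1 m le_rfl (by omega) hm]
    rw [cactusS, phiHom_of]
    show tQ r (m - 1) * (tQ r (m - 1) * tQ r (m - 1)) = tQ r (m - 1)
    rw [tQ_cancel]
  · rw [S_eq_one (by omega), map_one, show m - 1 = 0 by omega, tQ_zero]

theorem psi_phi_comp : (psiHom r).comp (phiHom r) = MonoidHom.id (CactusGroup r) := by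
  apply PresentedGroup.ext
  intro g
  obtain ⟨p, q, hp, hpq, hqr⟩ := g
  rw [MonoidHom.comp_apply, MonoidHom.id_apply, phiHom_of]
  show psiHom r (tQ r (q - 1) * (tQ r (q - p) * tQ r (q - 1))) = _
  rw [map_mul, map_mul, psiHom_tQ (q - 1) (by omega), psiHom_tQ (q - p) (by omega),
    show q - 1 + 1 = q by omega, show q - p + 1 = q - p + 1 from rfl]
  have hc := Sconj (r := r) (n := q) (k := 1) (l := q - p + 1) (by omega) hqr le_rfl (by omega)
  rw [show q + 1 - (q - p + 1) = p by omega, show q + 1 - 1 = q by omega] at hc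
  rw [hc, S_eq p q hp hpq hqr]
  rfl

theorem tt_of {i : ℕ} (h1 : 1 ≤ i) (h2 : i ≤ r - 1) :
    tt r i = PresentedGroup.of (⟨i, h1, h2⟩ : TauGen r) := by
  rw [tt, tauF, dif_pos ⟨h1, h2⟩]
  rfl

theorem tQprod_eq_tt {i : ℕ} (h1 : 1 ≤ i) :
    tQ r (i - 1) * (tQ r i * (tQ r (i - 1) * tQ r (i - 2))) = tt r i := by
  match i, h1 with
  | 1, _ =>
    show tQ r 0 * (tQ r 1 * (tQ r 0 * tQ r 0)) = tt r 1
    rw [tQ_zero, tQ_succ 0, tQ_zero, tD_succ 0, tD_zero]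
    simp only [one_mul, mul_one]
  | (i' + 2), _ =>
    show tQ r (i' + 1) * (tQ r (i' + 2) * (tQ r (i' + 1) * tQ r i')) = tt r (i' + 2)
    rw [tQ_succ (i' + 1)]
    simp only [mul_assoc]
    rw [tQ_cancel]
    rw [tD_succ (i' + 1)]
    simp only [mul_assoc]
    rw [tDQ i']
    rw [tQ_sq, mul_one]

theorem phi_psi_comp : (phiHom r).comp (psiHom r) = MonoidHom.id (BKGroup r) := by
  apply PresentedGroup.ext
  intro x
  obtain ⟨i, h1, h2⟩ := x
  rw [MonoidHom.comp_apply, MonoidHom.id_apply]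
  erw [psiHom_of]
  show phiHom r (psiT r i) = _
  have hir : i + 1 ≤ r := by omega
  rw [psiT, map_mul, map_mul, map_mul, phiHom_X i (by omega), phiHom_X (i + 1) hir,
    phiHom_X (i - 1) (by omega), Nat.add_sub_cancel,
    show i - 1 - 1 = i - 2 by omega]
  rw [tQprod_eq_tt h1, tt_of h1 h2]
  rfl

noncomputable def cactusEquiv (r : ℕ) : CactusGroup r ≃* BKGroup r :=
  MonoidHom.toMulEquiv (phiHom r) (psiHom r) psi_phi_comp phi_psi_comp

theorem cactusEquiv_apply (x : CactusGroup r) : cactusEquiv r x = phiHom r x := rfl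

theorem cactusEquiv_symm_apply (x : BKGroup r) : (cactusEquiv r).symm x = psiHom r x := rfl

end CBK

/-- The map `s_{i,j} ↦ q_{j-1} q_{j-i} q_{j-1}` extends to an isomorphism
`𝔠_r ≃ G_r`, whose inverse sends `τ_1 ↦ s_{1,2}`, `τ_2 ↦ s_{1,2} s_{1,3} s_{1,2}`,
and `τ_i ↦ s_{1,i} s_{1,i+1} s_{1,i} s_{1,i-1}` for `i > 2`. -/
theorem cactus_iso_bk (r : ℕ) (hr : 1 ≤ r) :
    ∃ φ : CactusGroup r ≃* BKGroup r,
      (∀ (i j : ℕ) (h1 : 1 ≤ i) (h2 : i < j) (h3 : j ≤ r),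
        φ (cactusS r i j h1 h2 h3) =
          bkMk r (qWord r (j - 1) * qWord r (j - i) * qWord r (j - 1))) ∧
      (∀ h2r : 2 ≤ r,
        φ.symm (bkTau r 1 le_rfl (by omega)) = cactusS r 1 2 le_rfl one_lt_two h2r) ∧
      (∀ h3r : 3 ≤ r,
        φ.symm (bkTau r 2 one_le_two (by omega)) =
          cactusS r 1 2 le_rfl one_lt_two (by omega) *
            cactusS r 1 3 le_rfl (by omega) h3r *
              cactusS r 1 2 le_rfl one_lt_two (by omega)) ∧
      (∀ (i : ℕ) (hi : 3 ≤ i) (hir : i ≤ r - 1),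
        φ.symm (bkTau r i (by omega) hir) =
          cactusS r 1 i le_rfl (by omega) (by omega) *
            cactusS r 1 (i + 1) le_rfl (by omega) (by omega) *
              cactusS r 1 i le_rfl (by omega) (by omega) *
                cactusS r 1 (i - 1) le_rfl (by omega) (by omega)) := by
  refine ⟨CBK.cactusEquiv r, ?_, ?_, ?_, ?_⟩
  · intro i j h1 h2 h3
    rw [cactusS, CBK.cactusEquiv_apply, CBK.phiHom_of]
    show CBK.tQ r (j - 1) * (CBK.tQ r (j - i) * CBK.tQ r (j - 1)) = _
    rw [map_mul, map_mul]
    simp only [CBK.tQ, mul_assoc]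
  · intro h2r
    rw [bkTau, CBK.cactusEquiv_symm_apply]
    erw [CBK.psiHom_of]
    show CBK.psiT r 1 = _
    rw [CBK.psiT]
    norm_num
    rw [CBK.S_eq_one (p := 1) (q := 1) (by omega), CBK.S_eq_one (p := 1) (q := 0) (by omega),
      CBK.S_eq 1 2 le_rfl one_lt_two h2r]
    simp only [one_mul, mul_one]
  · intro h3r
    rw [bkTau, CBK.cactusEquiv_symm_apply]
    erw [CBK.psiHom_of]
    show CBK.psiT r 2 = _
    rw [CBK.psiT]
    norm_num
    rw [CBK.S_eq_one (p := 1) (q := 1) (by omega),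
      CBK.S_eq 1 2 le_rfl one_lt_two (by omega), CBK.S_eq 1 3 le_rfl (by omega) h3r]
    simp only [one_mul, mul_one, mul_assoc]
  · intro i hi hir
    rw [bkTau, CBK.cactusEquiv_symm_apply]
    erw [CBK.psiHom_of]
    show CBK.psiT r i = _
    rw [CBK.psiT,
      CBK.S_eq 1 i le_rfl (by omega) (by omega),
      CBK.S_eq 1 (i + 1) le_rfl (by omega) (by omega),
      CBK.S_eq 1 (i - 1) le_rfl (by omega) (by omega)]
    simp only [mul_assoc]
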